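/- arXiv:1805.11487 — 7 statements merged into one kernel-verified Lean document; each statement's English description precedes it below -/
import Mathlib

section
/- If E and F are real matrices with the same number of rows τ, then rank([E F]) = rank(E) + rank((I_τ − E E⁺) F), where [E F] denotes the matrix obtained by horizontal concatenation and E⁺ is the Moore–Penrose pseudoinverse of E. -/
open Matrix

def IsMP {m n : Type*} [Fintype m] [Fintype n]
    (E : Matrix m n ℝ) (X : Matrix n m ℝ) : Prop :=
  E * X * E = E ∧ X * E * X = X ∧ (E * X)ᵀ = E * X ∧ (X * E)ᵀ = X * E

theorem stmt0 {τ μ δ : ℕ} (E : Matrix (Fin τ) (Fin μ) ℝ) (F : Matrix (Fin τ) (Fin δ) ℝ)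
    (Ep : Matrix (Fin μ) (Fin τ) ℝ) (hEp : IsMP E Ep) :
    (fromCols E F).rank = E.rank + ((1 - E * Ep) * F).rank := by
  classical
  set P : Matrix (Fin τ) (Fin τ) ℝ := E * Ep with hP
  have hPE : P * E = E := by simpa [hP, Matrix.mul_assoc] using hEp.1
  have hPP : P * P = P := by
    have : E * Ep * E * Ep = E * Ep := by rw [hEp.1]
    simpa [hP, Matrix.mul_assoc] using this
  set S := LinearMap.range E.mulVecLin with hS
  set T := LinearMap.range ((1 - P) * F).mulVecLin with hT
  have hrange : LinearMap.range (fromCols E F).mulVecLin = S ⊔ T := by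
    apply le_antisymm
    · rintro x ⟨w, rfl⟩
      have hw : (fromCols E F).mulVecLin w =
          E *ᵥ (w ∘ Sum.inl) + F *ᵥ (w ∘ Sum.inr) := by
        rw [Matrix.mulVecLin_apply]
        conv_lhs => rw [← Sum.elim_comp_inl_inr w]
        rw [Matrix.fromCols_mulVec_sumElim]
      rw [hw]
      have hF : F *ᵥ (w ∘ Sum.inr) =
          E *ᵥ ((Ep * F) *ᵥ (w ∘ Sum.inr)) + ((1 - P) * F) *ᵥ (w ∘ Sum.inr) := by
        rw [Matrix.mulVec_mulVec, ← Matrix.add_mulVec]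
        simp [hP, Matrix.mul_assoc, Matrix.sub_mul]
      rw [hF, ← add_assoc, ← Matrix.mulVec_add]
      exact Submodule.add_mem_sup ⟨_, rfl⟩ ⟨_, rfl⟩
    · apply sup_le
      · rintro x ⟨u, rfl⟩
        refine ⟨Sum.elim u 0, ?_⟩
        simp [Matrix.fromCols_mulVec_sumElim]
      · rintro x ⟨v, rfl⟩
        refine ⟨Sum.elim (-((Ep * F) *ᵥ v)) v, ?_⟩
        simp only [Matrix.mulVecLin_apply, Matrix.fromCols_mulVec_sumElim,
          Matrix.mulVec_neg, Matrix.mulVec_mulVec]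
        rw [Matrix.sub_mul, Matrix.sub_mulVec]
        simp [hP, Matrix.mul_assoc]
        abel
  have hdis : Disjoint S T := by
    rw [Submodule.disjoint_def]
    rintro x ⟨u, rfl⟩ hx
    obtain ⟨v, hv⟩ := hx
    have h1 : P *ᵥ (E.mulVecLin u) = E.mulVecLin u := by
      simp only [Matrix.mulVecLin_apply, Matrix.mulVec_mulVec, hPE]
    have h2 : P *ᵥ (E.mulVecLin u) = 0 := by
      rw [← hv]
      simp only [Matrix.mulVecLin_apply, Matrix.mulVec_mulVec, ← Matrix.mul_assoc]
      have : P * (1 - P) = 0 := by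
        rw [Matrix.mul_sub, Matrix.mul_one, hPP, sub_self]
      rw [this, Matrix.zero_mul, Matrix.zero_mulVec]
    rw [h1] at h2
    exact h2
  have hfin : Module.finrank ℝ ↥(S ⊔ T) = Module.finrank ℝ S + Module.finrank ℝ T := by
    have := Submodule.finrank_sup_add_finrank_inf_eq S T
    rw [hdis.eq_bot] at this
    simpa using this
  rw [Matrix.rank, hrange, hfin]
  rfl
end

section
/- Let Ā : m × n̄ and W : q × n̄ be real matrices with Ā Wᵀ = 0. Then the Moore–Penrose pseudoinverse of the stacked matrix [Ā; W] (Ā on top of W) equals the horizontal concatenation [Ā⁺ W⁺]. -/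
open Matrix

theorem stmt4 {m q nb : ℕ} (Abar : Matrix (Fin m) (Fin nb) ℝ) (W : Matrix (Fin q) (Fin nb) ℝ)
    (h : Abar * Wᵀ = 0)
    (Abp : Matrix (Fin nb) (Fin m) ℝ) (hAbp : IsMP Abar Abp)
    (Wp : Matrix (Fin nb) (Fin q) ℝ) (hWp : IsMP W Wp) :
    IsMP (fromRows Abar W) (fromCols Abp Wp) := by
  obtain ⟨hA1, hA2, hA3, hA4⟩ := hAbp
  obtain ⟨hW1, hW2, hW3, hW4⟩ := hWp
  have h' : W * Abarᵀ = 0 := by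
    have := congrArg Matrix.transpose h
    simpa [Matrix.transpose_mul] using this
  have hAWp : Abar * Wp = 0 := by
    have hWpeq : Wp = Wᵀ * Wpᵀ * Wp := by
      calc Wp = Wp * W * Wp := hW2.symm
        _ = (Wp * W)ᵀ * Wp := by rw [hW4]
        _ = Wᵀ * Wpᵀ * Wp := by rw [Matrix.transpose_mul]
    calc Abar * Wp = Abar * (Wᵀ * Wpᵀ * Wp) := by rw [← hWpeq]
      _ = Abar * Wᵀ * Wpᵀ * Wp := by simp [Matrix.mul_assoc]
      _ = 0 := by rw [h]; simp
  have hWAp : W * Abp = 0 := by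
    have hApeq : Abp = Abarᵀ * Abpᵀ * Abp := by
      calc Abp = Abp * Abar * Abp := hA2.symm
        _ = (Abp * Abar)ᵀ * Abp := by rw [hA4]
        _ = Abarᵀ * Abpᵀ * Abp := by rw [Matrix.transpose_mul]
    calc W * Abp = W * (Abarᵀ * Abpᵀ * Abp) := by rw [← hApeq]
      _ = W * Abarᵀ * Abpᵀ * Abp := by simp [Matrix.mul_assoc]
      _ = 0 := by rw [h']; simp
  have hEX : fromRows Abar W * fromCols Abp Wp =
      fromBlocks (Abar * Abp) 0 0 (W * Wp) := by
    rw [fromRows_mul_fromCols, hAWp, hWAp]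
  have hXE : fromCols Abp Wp * fromRows Abar W = Abp * Abar + Wp * W :=
    fromCols_mul_fromRows _ _ _ _
  refine ⟨?_, ?_, ?_, ?_⟩
  · rw [hEX]
    simp only [fromBlocks_mul_fromRows, Matrix.zero_mul, add_zero, zero_add,
      fromRows_mul]
    rw [hA1, hW1]
  · rw [hXE]
    simp only [mul_fromCols, Matrix.mul_add, Matrix.add_mul]
    rw [hA2, hW2]
    have e1 : Wp * W * Abp = 0 := by
      have : Wp = Wp * Wpᵀ * Wᵀ := by
        calc Wp = Wp * (W * Wp) := by rw [← Matrix.mul_assoc, hW2]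
          _ = Wp * (W * Wp)ᵀ := by rw [hW3]
          _ = Wp * (Wpᵀ * Wᵀ) := by rw [Matrix.transpose_mul]
          _ = Wp * Wpᵀ * Wᵀ := by rw [Matrix.mul_assoc]
      calc Wp * W * Abp = Wp * (W * Abp) := by rw [Matrix.mul_assoc]
        _ = 0 := by rw [hWAp]; simp
    have e2 : Abp * Abar * Wp = 0 := by
      calc Abp * Abar * Wp = Abp * (Abar * Wp) := by rw [Matrix.mul_assoc]
        _ = 0 := by rw [hAWp]; simp
    rw [e1, e2]
    ext i (j|j) <;> simp [fromCols]
  · rw [hEX]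
    simp [fromBlocks_transpose, hA3, hW3]
  · rw [hXE]
    simp [Matrix.transpose_add, Matrix.transpose_mul]
    rw [show Abarᵀ * Abpᵀ = (Abp * Abar)ᵀ by rw [Matrix.transpose_mul],
      show Wᵀ * Wpᵀ = (Wp * W)ᵀ by rw [Matrix.transpose_mul], hA4, hW4]
end

section
/- Let A : m × n with m ≤ n have full row rank, Γ : m × q, Ā = [A Γ], P = Āᵀ(Ā Āᵀ)⁻¹ Ā (well defined since Ā has full row rank), Y = [0 I_q], and S = Y(I − P)Yᵀ. Then S is invertible. -/
open Matrix

theorem stmt7 {m n q : ℕ} (hmn : m ≤ n) (A : Matrix (Fin m) (Fin n) ℝ) (hA : A.rank = m)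
    (G : Matrix (Fin m) (Fin q) ℝ) :
    let Abar := fromCols A G
    let P := Abarᵀ * (Abar * Abarᵀ)⁻¹ * Abar
    let Y : Matrix (Fin q) (Fin n ⊕ Fin q) ℝ := fromCols 0 1
    IsUnit (Y * (1 - P) * Yᵀ) := by
  intro Abar P Y
  -- rows of A are linearly independent
  have hli : LinearIndependent ℝ (fun i => A i) := by
    rw [linearIndependent_iff_card_eq_finrank_span]
    have h := A.rank_eq_finrank_span_row
    rw [hA] at h
    rw [Set.finrank, Fintype.card_fin]; exact h
  have hinj : Function.Injective (Aᵀ).mulVec := by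
    rw [Matrix.mulVec_injective_iff]
    exact hli
  have hAT : ∀ w : Fin m → ℝ, Aᵀ *ᵥ w = 0 → w = 0 := by
    intro w hw
    apply hinj
    simpa using hw
  -- A * Aᵀ is positive definite
  have hAAT : (A * Aᵀ).PosDef := by
    rw [Matrix.posDef_iff_dotProduct_mulVec]
    constructor
    · rw [Matrix.IsHermitian, conjTranspose_eq_transpose_of_trivial]
      simp [Matrix.transpose_mul]
    · intro x hx
      have h1 : (A * Aᵀ) *ᵥ x = A *ᵥ (Aᵀ *ᵥ x) := by rw [mulVec_mulVec]
      have h2 : star x ⬝ᵥ (A * Aᵀ) *ᵥ x = (Aᵀ *ᵥ x) ⬝ᵥ (Aᵀ *ᵥ x) := by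
        simp [h1, dotProduct_mulVec, mulVec_transpose, star_trivial]
      rw [h2]
      have hne : Aᵀ *ᵥ x ≠ 0 := fun h => hx (hAT x h)
      have hnonneg : 0 ≤ (Aᵀ *ᵥ x) ⬝ᵥ (Aᵀ *ᵥ x) := by
        simpa [star_trivial] using dotProduct_star_self_nonneg (Aᵀ *ᵥ x)
      rcases hnonneg.lt_or_eq with h | h
      · exact h
      · exact absurd (dotProduct_self_eq_zero.mp h.symm) hne
  -- M := Abar * Abarᵀ is positive definite, hence invertible
  have hMeq : Abar * Abarᵀ = A * Aᵀ + G * Gᵀ := by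
    show fromCols A G * (fromCols A G)ᵀ = _
    rw [transpose_fromCols, fromCols_mul_fromRows]
  have hGGT : (G * Gᵀ).PosSemidef := by
    have := Matrix.posSemidef_self_mul_conjTranspose G
    rwa [conjTranspose_eq_transpose_of_trivial] at this
  have hM : (Abar * Abarᵀ).PosDef := by
    rw [hMeq]
    exact hAAT.add_posSemidef hGGT
  have hMu : IsUnit (Abar * Abarᵀ) := hM.isUnit
  have hMdet : IsUnit (Abar * Abarᵀ).det := (Matrix.isUnit_iff_isUnit_det _).mp hMu
  have hMinv : (Abar * Abarᵀ)⁻¹ * (Abar * Abarᵀ) = 1 := Matrix.nonsing_inv_mul _ hMdet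
  -- M and M⁻¹ are symmetric
  have hMsym : (Abar * Abarᵀ)ᵀ = Abar * Abarᵀ := by
    rw [Matrix.transpose_mul, Matrix.transpose_transpose]
  have hMinvsym : ((Abar * Abarᵀ)⁻¹)ᵀ = (Abar * Abarᵀ)⁻¹ := by
    rw [Matrix.transpose_nonsing_inv, hMsym]
  -- P is symmetric and idempotent
  have hPsym : Pᵀ = P := by
    show (Abarᵀ * (Abar * Abarᵀ)⁻¹ * Abar)ᵀ = _
    rw [Matrix.transpose_mul, Matrix.transpose_mul, Matrix.transpose_transpose, hMinvsym]
    simp [P, Matrix.mul_assoc]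
  have hPP : P * P = P := by
    show (Abarᵀ * (Abar * Abarᵀ)⁻¹ * Abar) * (Abarᵀ * (Abar * Abarᵀ)⁻¹ * Abar) = _
    calc (Abarᵀ * (Abar * Abarᵀ)⁻¹ * Abar) * (Abarᵀ * (Abar * Abarᵀ)⁻¹ * Abar)
        = Abarᵀ * ((Abar * Abarᵀ)⁻¹ * (Abar * Abarᵀ)) * ((Abar * Abarᵀ)⁻¹ * Abar) := by
          simp only [Matrix.mul_assoc]
      _ = Abarᵀ * (Abar * Abarᵀ)⁻¹ * Abar := by rw [hMinv]; simp [Matrix.mul_assoc]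
  -- Q := 1 - P is symmetric idempotent
  set Q : Matrix (Fin n ⊕ Fin q) (Fin n ⊕ Fin q) ℝ := 1 - P with hQ
  have hQsym : Qᵀ = Q := by rw [hQ, Matrix.transpose_sub, Matrix.transpose_one, hPsym]
  have hQQ : Q * Q = Q := by
    rw [hQ, Matrix.sub_mul, Matrix.mul_sub, Matrix.mul_sub, hPP]
    simp
  -- key injectivity: (Y * Q * Yᵀ) *ᵥ x = 0 → x = 0
  have hker : ∀ x : Fin q → ℝ, (Y * Q * Yᵀ) *ᵥ x = 0 → x = 0 := by
    intro x hx
    -- u := Yᵀ *ᵥ x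
    set u : (Fin n ⊕ Fin q) → ℝ := Yᵀ *ᵥ x with hu
    have hfact : Y * Q * Yᵀ = (Y * Q) * (Y * Q)ᵀ := by
      calc Y * Q * Yᵀ = Y * (Q * Q) * Yᵀ := by rw [hQQ]
        _ = (Y * Q) * (Y * Q)ᵀ := by
          simp only [Matrix.transpose_mul, hQsym, Matrix.mul_assoc]
    have hdot : (x ᵥ* (Y * Q)) ⬝ᵥ (x ᵥ* (Y * Q)) = 0 := by
      have h0 : x ⬝ᵥ (Y * Q * Yᵀ) *ᵥ x = 0 := by rw [hx, dotProduct_zero]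
      rw [hfact, ← mulVec_mulVec, dotProduct_mulVec, mulVec_transpose] at h0
      exact h0
    have hc0 : x ᵥ* (Y * Q) = 0 := dotProduct_self_eq_zero.mp hdot
    have hQu : Q *ᵥ u = 0 := by
      rw [hu, mulVec_mulVec]
      have hQY : Q * Yᵀ = (Y * Q)ᵀ := by rw [Matrix.transpose_mul, hQsym]
      rw [hQY, mulVec_transpose, hc0]
    -- u = P *ᵥ u
    have huP : u = P *ᵥ u := by
      have : (1 - P) *ᵥ u = 0 := hQu
      rw [Matrix.sub_mulVec, Matrix.one_mulVec, sub_eq_zero] at this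
      exact this
    -- write P *ᵥ u = Abarᵀ *ᵥ w
    set w : Fin m → ℝ := ((Abar * Abarᵀ)⁻¹ * Abar) *ᵥ u with hw
    have huw : u = Abarᵀ *ᵥ w := by
      rw [hw, mulVec_mulVec, ← Matrix.mul_assoc]
      exact huP
    -- u = Sum.elim 0 x
    have huelim : u = Sum.elim (0 : Fin n → ℝ) x := by
      rw [hu]
      show (fromCols (0 : Matrix (Fin q) (Fin n) ℝ) 1)ᵀ *ᵥ x = _
      rw [transpose_fromCols, fromRows_mulVec]
      simp
    -- Abarᵀ *ᵥ w = Sum.elim (Aᵀ *ᵥ w) (Gᵀ *ᵥ w)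
    have habar : Abarᵀ *ᵥ w = Sum.elim (Aᵀ *ᵥ w) (Gᵀ *ᵥ w) := by
      show (fromCols A G)ᵀ *ᵥ w = _
      rw [transpose_fromCols, fromRows_mulVec]
    have hcomp : Sum.elim (0 : Fin n → ℝ) x = Sum.elim (Aᵀ *ᵥ w) (Gᵀ *ᵥ w) := by
      rw [← huelim, huw, habar]
    have hAw : Aᵀ *ᵥ w = 0 := by
      funext i
      have := congrFun hcomp (Sum.inl i)
      simpa using this.symm
    have hw0 : w = 0 := hAT w hAw
    have hxG : x = Gᵀ *ᵥ w := by
      funext j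
      have := congrFun hcomp (Sum.inr j)
      simpa using this
    rw [hxG, hw0, mulVec_zero]
  -- conclude via injectivity of mulVec
  have hinj' : Function.Injective (Y * Q * Yᵀ).mulVec := by
    intro a b hab
    have : (Y * Q * Yᵀ) *ᵥ (a - b) = 0 := by
      rw [Matrix.mulVec_sub, hab, sub_self]
    have := hker _ this
    exact sub_eq_zero.mp this
  exact Matrix.mulVec_injective_iff_isUnit.mp hinj'
end

section
/- Let Ā : m × n̄ be real, Y = [0 I_q] : q × n̄, P = Ā⁺Ā, and W = Y(I − P). Then rank(W) = q − dim(range(Yᵀ) ∩ range(Āᵀ)). -/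
open Matrix

lemma finrank_map_aux {V W : Type*} [AddCommGroup V] [Module ℝ V]
    [AddCommGroup W] [Module ℝ W] [FiniteDimensional ℝ V]
    (f : V →ₗ[ℝ] W) (p : Submodule ℝ V) :
    Module.finrank ℝ (p.map f) =
      Module.finrank ℝ p - Module.finrank ℝ ↥(p ⊓ LinearMap.ker f) := by
  have h := LinearMap.finrank_range_add_finrank_ker (f.domRestrict p)
  rw [LinearMap.range_domRestrict] at h
  have hker : Module.finrank ℝ (LinearMap.ker (f.domRestrict p)) =
      Module.finrank ℝ ↥(p ⊓ LinearMap.ker f) := by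
    rw [LinearMap.ker_domRestrict]
    have : Submodule.comap p.subtype (LinearMap.ker f) =
        Submodule.comap p.subtype (p ⊓ LinearMap.ker f) := by
      ext ⟨x, hx⟩
      simp [hx]
    rw [this]
    exact (Submodule.comapSubtypeEquivOfLe inf_le_left).finrank_eq
  omega

theorem stmt8 {m n q : ℕ} (Abar : Matrix (Fin m) (Fin n ⊕ Fin q) ℝ)
    (Abp : Matrix (Fin n ⊕ Fin q) (Fin m) ℝ) (hAbp : IsMP Abar Abp) :
    let Y : Matrix (Fin q) (Fin n ⊕ Fin q) ℝ := fromCols 0 1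
    (Y * (1 - Abp * Abar)).rank =
      q - Module.finrank ℝ
        ↥(LinearMap.range Yᵀ.mulVecLin ⊓ LinearMap.range Abarᵀ.mulVecLin) := by
  intro Y
  obtain ⟨h1, h2, h3, h4⟩ := hAbp
  have hYdef : Y = fromCols 0 1 := rfl
  have hYYt : Y * Yᵀ = 1 := by
    rw [hYdef, transpose_fromCols, fromCols_mul_fromRows]
    simp
  have hLI : Function.LeftInverse Y.mulVecLin Yᵀ.mulVecLin := fun x => by
    rw [mulVecLin_apply, mulVecLin_apply, mulVec_mulVec, hYYt, one_mulVec]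
  have hYinj : Function.Injective Yᵀ.mulVecLin := hLI.injective
  have hYrank : Module.finrank ℝ (LinearMap.range Yᵀ.mulVecLin) = q := by
    rw [LinearMap.finrank_range_of_inj hYinj]
    simp
  have hPA : (1 - Abp * Abar) * Abarᵀ = 0 := by
    have h5 : Abp * Abar * Abarᵀ = Abarᵀ := by
      calc Abp * Abar * Abarᵀ = (Abp * Abar)ᵀ * Abarᵀ := by rw [h4]
        _ = (Abar * (Abp * Abar))ᵀ := by rw [← transpose_mul]
        _ = (Abar * Abp * Abar)ᵀ := by rw [Matrix.mul_assoc]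
        _ = Abarᵀ := by rw [h1]
    rw [Matrix.sub_mul, Matrix.one_mul, h5, sub_self]
  have hker : LinearMap.ker (1 - Abp * Abar).mulVecLin = LinearMap.range Abarᵀ.mulVecLin := by
    ext x
    constructor
    · intro hx
      have hx' : (Abp * Abar).mulVecLin x = x := by
        have h' : (1 - Abp * Abar).mulVecLin x = 0 := hx
        simp only [mulVecLin_apply, sub_mulVec, one_mulVec, sub_eq_zero] at h'
        simpa [mulVecLin_apply] using h'.symm
      refine ⟨Abpᵀ.mulVecLin x, ?_⟩
      have hPs : Abarᵀ * Abpᵀ = Abp * Abar := by rw [← transpose_mul, h4]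
      rw [← LinearMap.comp_apply, ← Matrix.mulVecLin_mul, hPs]
      exact hx'
    · rintro ⟨v, rfl⟩
      rw [LinearMap.mem_ker, ← LinearMap.comp_apply, ← Matrix.mulVecLin_mul, hPA]
      simp
  have hWt : (Y * (1 - Abp * Abar))ᵀ = (1 - Abp * Abar) * Yᵀ := by
    rw [transpose_mul, transpose_sub, transpose_one, h4]
  rw [← Matrix.rank_transpose, hWt, Matrix.rank, Matrix.mulVecLin_mul,
    LinearMap.range_comp, finrank_map_aux, hYrank, hker]
end

section
/- Let B = [B₁ … B_p] with B_iᵀB_j = 0 for i ≠ j. Then the Moore–Penrose pseudoinverse of B is obtained by stacking the pseudoinverses: B⁺ = [B₁⁺; B₂⁺; … ; B_p⁺] (vertical concatenation). -/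
open Matrix

lemma mp_unique {m n : Type*} [Fintype m] [Fintype n]
    {E : Matrix m n ℝ} {X Y : Matrix n m ℝ}
    (hX : IsMP E X) (hY : IsMP E Y) : X = Y := by
  obtain ⟨hX1, hX2, hX3, hX4⟩ := hX
  obtain ⟨hY1, hY2, hY3, hY4⟩ := hY
  have h1 : E * X = E * Y := by
    calc E * X = (E * X)ᵀ := hX3.symm
      _ = Xᵀ * Eᵀ := by rw [transpose_mul]
      _ = Xᵀ * (E * Y * E)ᵀ := by rw [hY1]
      _ = Xᵀ * (Eᵀ * (E * Y)ᵀ) := by rw [transpose_mul]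
      _ = (E * X)ᵀ * (E * Y)ᵀ := by simp [transpose_mul, Matrix.mul_assoc]
      _ = (E * X) * (E * Y) := by rw [hX3, hY3]
      _ = (E * X * E) * Y := by simp [Matrix.mul_assoc]
      _ = E * Y := by rw [hX1]
  have h2 : X * E = Y * E := by
    calc X * E = (X * E)ᵀ := hX4.symm
      _ = Eᵀ * Xᵀ := by rw [transpose_mul]
      _ = (E * Y * E)ᵀ * Xᵀ := by rw [hY1]
      _ = (Y * E)ᵀ * (Eᵀ * Xᵀ) := by simp [transpose_mul, Matrix.mul_assoc]
      _ = (Y * E) * (X * E)ᵀ := by rw [hY4, transpose_mul]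
      _ = (Y * E) * (X * E) := by rw [hX4]
      _ = Y * (E * X * E) := by simp [Matrix.mul_assoc]
      _ = Y * E := by rw [hX1]
  calc X = X * E * X := hX2.symm
    _ = X * (E * Y) := by rw [Matrix.mul_assoc, h1]
    _ = (Y * E) * Y := by rw [← Matrix.mul_assoc, h2]
    _ = Y := hY2

theorem stmt13 {p μ : ℕ} (r : Fin p → ℕ)
    (Bi : (i : Fin p) → Matrix (Fin μ) (Fin (r i)) ℝ)
    (B : Matrix (Fin μ) ((i : Fin p) × Fin (r i)) ℝ)
    (hB : B = Matrix.of fun k ic => Bi ic.1 k ic.2)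
    (horth : ∀ i j, i ≠ j → (Bi i)ᵀ * Bi j = 0)
    (Bp : Matrix ((i : Fin p) × Fin (r i)) (Fin μ) ℝ) (hBp : IsMP B Bp)
    (Bip : (i : Fin p) → Matrix (Fin (r i)) (Fin μ) ℝ)
    (hBip : ∀ i, IsMP (Bi i) (Bip i)) :
    Bp = Matrix.of fun ic k => Bip ic.1 ic.2 k := by
  set X : Matrix ((i : Fin p) × Fin (r i)) (Fin μ) ℝ :=
    Matrix.of fun ic k => Bip ic.1 ic.2 k with hX
  -- key orthogonality
  have hXB0 : ∀ i j, i ≠ j → Bip i * Bi j = 0 := by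
    intro i j hij
    have h1 : Bip i * Bi i * Bip i = Bip i := (hBip i).2.1
    have h2 : (Bi i * Bip i)ᵀ = Bi i * Bip i := (hBip i).2.2.1
    calc Bip i * Bi j = (Bip i * Bi i * Bip i) * Bi j := by rw [h1]
      _ = Bip i * ((Bi i * Bip i)ᵀ * Bi j) := by
          rw [h2]; simp [Matrix.mul_assoc]
      _ = Bip i * ((Bip i)ᵀ * ((Bi i)ᵀ * Bi j)) := by
          rw [transpose_mul, Matrix.mul_assoc]
      _ = 0 := by rw [horth i j hij]; simp
  -- product structure lemmas
  have hEX : B * X = ∑ i, Bi i * Bip i := by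
    ext k l
    simp only [hB, hX, mul_apply, of_apply, Finset.sum_apply]
    rw [← Finset.univ_sigma_univ, Finset.sum_sigma]
    rw [Matrix.sum_apply]
    simp [mul_apply]
  have hmulB : ∀ (M : Matrix (Fin μ) (Fin μ) ℝ) k jc, (M * B) k jc = (M * Bi jc.1) k jc.2 := by
    intro M k jc
    simp [hB, mul_apply]
  have hXmul : ∀ (M : Matrix (Fin μ) (Fin μ) ℝ) ic k, (X * M) ic k = (Bip ic.1 * M) ic.2 k := by
    intro M ic k
    simp [hX, mul_apply]
  have hXBapp : ∀ ic jc, (X * B) ic jc = (Bip ic.1 * Bi jc.1) ic.2 jc.2 := by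
    intro ic jc
    simp [hX, hB, mul_apply]
  -- X satisfies the four MP equations for B
  have c1 : B * X * B = B := by
    ext k jc
    rw [hmulB, hEX, hB]
    rw [Matrix.sum_mul]
    rw [Matrix.sum_apply]
    rw [Finset.sum_eq_single jc.1]
    · rw [(hBip jc.1).1]; rfl
    · intro i _ hi
      rw [Matrix.mul_assoc, hXB0 i jc.1 hi]; simp
    · simp
  have c2 : X * B * X = X := by
    rw [Matrix.mul_assoc, hEX]
    ext ic k
    rw [hXmul]
    rw [Matrix.mul_sum]
    rw [Matrix.sum_apply]
    rw [Finset.sum_eq_single ic.1]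
    · rw [← Matrix.mul_assoc, (hBip ic.1).2.1]; rfl
    · intro i _ hi
      rw [← Matrix.mul_assoc, hXB0 ic.1 i (Ne.symm hi)]; simp
    · simp
  have c3 : (B * X)ᵀ = B * X := by
    rw [hEX, transpose_sum]
    exact Finset.sum_congr rfl fun i _ => (hBip i).2.2.1
  have c4 : (X * B)ᵀ = X * B := by
    ext ic jc
    rw [transpose_apply, hXBapp, hXBapp]
    obtain ⟨i, c⟩ := ic
    obtain ⟨j, d⟩ := jc
    by_cases h : i = j
    · subst h
      have := (hBip i).2.2.2
      calc (Bip i * Bi i) d c = (Bip i * Bi i)ᵀ c d := rfl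
        _ = (Bip i * Bi i) c d := by rw [this]
    · rw [hXB0 j i (fun hh => h hh.symm), hXB0 i j h]; simp
  exact mp_unique hBp ⟨c1, c2, c3, c4⟩
end

section
/- Let A : m × n, b ∈ ℝ^m with b ∈ range(A), Γ : m × q, Ā = [A Γ], P = Ā⁺Ā, Y = [0 I_q], W = Y(I−P) = [B S], and f = −Y Ā⁺ b. If x solves A x = b, then the vector (x, 0) ∈ ℝ^{n+q} solves the block system [[A Γ];[B S]] (x,y) = (b, f). -/
open Matrix

theorem stmt15 {m n q : ℕ} (A : Matrix (Fin m) (Fin n) ℝ) (G : Matrix (Fin m) (Fin q) ℝ)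
    (b : Fin m → ℝ)
    (Abp : Matrix (Fin n ⊕ Fin q) (Fin m) ℝ) (hAbp : IsMP (fromCols A G) Abp)
    (W : Matrix (Fin q) (Fin n ⊕ Fin q) ℝ)
    (hW : W = fromCols (0 : Matrix (Fin q) (Fin n) ℝ) 1 * (1 - Abp * fromCols A G))
    (f : Fin q → ℝ)
    (hf : f = -((fromCols (0 : Matrix (Fin q) (Fin n) ℝ) 1 * Abp).mulVec b))
    (x : Fin n → ℝ) (hx : A.mulVec x = b) :
    (fromRows (fromCols A G) W).mulVec (Sum.elim x 0) = Sum.elim b f := by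
  have hAb : (fromCols A G).mulVec (Sum.elim x 0) = b := by
    rw [fromCols_mulVec_sumElim, hx, Matrix.mulVec_zero, add_zero]
  rw [fromRows_mulVec, hAb, hW, hf]
  congr 1
  have h0 : (fromCols (0 : Matrix (Fin q) (Fin n) ℝ) (1 : Matrix (Fin q) (Fin q) ℝ)).mulVec (Sum.elim x 0) = 0 := by
    rw [fromCols_mulVec_sumElim, Matrix.zero_mulVec, Matrix.mulVec_zero, add_zero]
  erw [← Matrix.mulVec_mulVec (Sum.elim x 0) (fromCols (0 : Matrix (Fin q) (Fin n) ℝ) 1)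
      (1 - Abp * fromCols A G),
    Matrix.sub_mulVec, Matrix.one_mulVec,
    ← Matrix.mulVec_mulVec (Sum.elim x 0) Abp (fromCols A G), hAb,
    Matrix.mulVec_sub, h0, zero_sub,
    Matrix.mulVec_mulVec]
  rfl
end

section
/- Let A : m × n, b ∈ range(A), Γ : m × q, Ā = [A Γ], P = Ā⁺Ā, Y = [0 I_q], W = Y(I−P) = [B S], f = −YĀ⁺b, and assume S = W Wᵀ is invertible. If (x, y) is the minimal-norm solution of the consistent system [[A Γ];[B S]](x,y) = (b,f), then y = 0 and A x = b. -/
open Matrix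

theorem stmt17 {m n q : ℕ} (A : Matrix (Fin m) (Fin n) ℝ) (G : Matrix (Fin m) (Fin q) ℝ)
    (b : Fin m → ℝ) (hb : ∃ x, A.mulVec x = b)
    (Abp : Matrix (Fin n ⊕ Fin q) (Fin m) ℝ) (hAbp : IsMP (fromCols A G) Abp)
    (W : Matrix (Fin q) (Fin n ⊕ Fin q) ℝ)
    (hW : W = fromCols (0 : Matrix (Fin q) (Fin n) ℝ) 1 * (1 - Abp * fromCols A G))
    (hS : IsUnit (W * Wᵀ))
    (f : Fin q → ℝ)
    (hf : f = -((fromCols (0 : Matrix (Fin q) (Fin n) ℝ) 1 * Abp).mulVec b))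
    (Mp : Matrix (Fin n ⊕ Fin q) (Fin m ⊕ Fin q) ℝ)
    (hMp : IsMP (fromRows (fromCols A G) W) Mp)
    (z : (Fin n ⊕ Fin q) → ℝ) (hz : z = Mp.mulVec (Sum.elim b f)) :
    (∀ j, z (Sum.inr j) = 0) ∧ A.mulVec (fun i => z (Sum.inl i)) = b := by
  obtain ⟨h1, h2, h3, h4⟩ := hAbp
  obtain ⟨k1, k2, k3, k4⟩ := hMp
  set Ab := fromCols A G with hAb
  set Y : Matrix (Fin q) (Fin n ⊕ Fin q) ℝ :=
    fromCols (0 : Matrix (Fin q) (Fin n) ℝ) 1 with hYdef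
  replace hW : W = Y * (1 - Abp * Ab) := hW
  replace hf : f = -((Y * Abp).mulVec b) := hf
  set S := W * Wᵀ with hSdef
  have hSdet : IsUnit S.det := (Matrix.isUnit_iff_isUnit_det S).mp hS
  have hWT : Wᵀ = (1 - Abp * Ab) * Yᵀ := by
    rw [hW, transpose_mul, transpose_sub, transpose_one, h4]
  have hAbW : Ab * Wᵀ = 0 := by
    rw [hWT, ← Matrix.mul_assoc, Matrix.mul_sub, Matrix.mul_one, ← Matrix.mul_assoc, h1,
      sub_self, Matrix.zero_mul]
  have hWAbp : W * Abp = 0 := by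
    rw [hW, Matrix.mul_assoc, Matrix.sub_mul, Matrix.one_mul, h2, sub_self, Matrix.mul_zero]
  have hidem : (1 - Abp * Ab) * (1 - Abp * Ab) = 1 - Abp * Ab := by
    have h5 : Abp * Ab * (Abp * Ab) = Abp * Ab := by
      rw [← Matrix.mul_assoc, h2]
    rw [Matrix.sub_mul, Matrix.one_mul, Matrix.mul_sub, Matrix.mul_one, h5, sub_self, sub_zero]
  have hYWT : Y * Wᵀ = S := by
    rw [hSdef, hWT, hW, Matrix.mul_assoc Y (1 - Abp * Ab),
      ← Matrix.mul_assoc (1 - Abp * Ab) (1 - Abp * Ab), hidem]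
  obtain ⟨x0, hx0⟩ := hb
  have hbr : Ab.mulVec (Sum.elim x0 0) = b := by
    rw [hAb, fromCols_mulVec_sumElim, hx0, mulVec_zero, add_zero]
  have hAbAbpb : (Ab * Abp).mulVec b = b := by
    rw [← hbr, mulVec_mulVec, h1]
  set w := (S⁻¹).mulVec f with hwdef
  set z0 := Abp.mulVec b + Wᵀ.mulVec w with hz0
  set M := fromRows Ab W with hM
  have hSw : S.mulVec w = f := by
    rw [hwdef, mulVec_mulVec, mul_nonsing_inv _ hSdet, one_mulVec]
  have hMz0 : M.mulVec z0 = Sum.elim b f := by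
    have e1 : Ab.mulVec z0 = b := by
      rw [hz0, mulVec_add, mulVec_mulVec, hAbAbpb, mulVec_mulVec, hAbW, zero_mulVec, add_zero]
    have e2 : W.mulVec z0 = f := by
      rw [hz0, mulVec_add, mulVec_mulVec, hWAbp, zero_mulVec, zero_add, mulVec_mulVec,
        ← hSdef, hSw]
    rw [hM, fromRows_mulVec, e1, e2]
  set u := Sum.elim (Abpᵀ.mulVec (Abp.mulVec b)) w with hu
  have hz0u : Mᵀ.mulVec u = z0 := by
    rw [hM, transpose_fromRows, hu, fromCols_mulVec_sumElim, hz0]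
    congr 1
    rw [mulVec_mulVec, mulVec_mulVec, ← transpose_mul, h4, h2]
  have hMpM : Mp * M * Mᵀ = Mᵀ := by
    have h6 : Mp * M * Mᵀ = (M * (Mp * M))ᵀ := by rw [transpose_mul, k4]
    rw [h6, ← Matrix.mul_assoc, k1]
  have hzz0 : z = z0 := by
    rw [hz, ← hMz0, mulVec_mulVec, ← hz0u, mulVec_mulVec, hMpM]
  have hYz0 : Y.mulVec z0 = 0 := by
    rw [hz0, mulVec_add, mulVec_mulVec w Y Wᵀ, hYWT, hSw, mulVec_mulVec b Y Abp, hf]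
    exact add_neg_cancel _
  have hinr : ∀ j, z0 (Sum.inr j) = 0 := by
    intro j
    have hsplit : z0 = Sum.elim (fun i => z0 (Sum.inl i)) (fun j => z0 (Sum.inr j)) := by
      funext i; cases i <;> rfl
    have h7 := congrFun hYz0 j
    rw [hYdef] at h7
    conv_lhs at h7 => rw [hsplit]
    rw [fromCols_mulVec_sumElim, zero_mulVec, one_mulVec] at h7
    simpa using h7
  have hAbz0 : Ab.mulVec z0 = b := by
    have h8 : Sum.elim (Ab.mulVec z0) (W.mulVec z0) = Sum.elim b f := by
      rw [← fromRows_mulVec, ← hM, hMz0]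
    exact funext fun i => congrFun h8 (Sum.inl i)
  constructor
  · intro j; rw [hzz0]; exact hinr j
  · have hsplit : z0 = Sum.elim (fun i => z0 (Sum.inl i)) (fun j => z0 (Sum.inr j)) := by
      funext i; cases i <;> rfl
    have hz0r : (fun j => z0 (Sum.inr j)) = (0 : Fin q → ℝ) := by
      funext j; exact hinr j
    rw [hzz0]
    calc A.mulVec (fun i => z0 (Sum.inl i)) = Ab.mulVec z0 := by
          conv_rhs => rw [hsplit]
          rw [hAb, fromCols_mulVec_sumElim, hz0r, mulVec_zero, add_zero]
      _ = b := hAbz0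
end
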